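/- Exponential bounds for the short-range part of the strip potential (conditions (2.11)-(2.12) for the periodic strip): (i) For all x > 0 and all y ∈ ℝ: V₂(x,y) ≥ −(2π)^{−1}·exp(−2πx/W). (ii) For every ε > 0 there exists c(ε,W) < ∞ such that V₂(x,y) ≤ c(ε,W)·exp(−2πx/W) for all x ≥ ε and all y ∈ ℝ. -/

import Mathlib

open Real

/-- The short-range correction `V₂` to the linear term in the periodic-strip
Coulomb potential. -/
noncomputable def stripV₂ (W x y : ℝ) : ℝ :=
  -(2 * π)⁻¹ *
    Real.log (‖1 - Complex.exp (-(2 * ↑π * ((x : ℂ) + Complex.I * (y : ℂ)) / ↑W))‖)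

lemma strip_abs_exp_eq (W x y : ℝ) (hW : 0 < W) :
    ‖Complex.exp (-(2 * ↑π * ((x : ℂ) + Complex.I * (y : ℂ)) / ↑W))‖
      = Real.exp (-(2 * π * x / W)) := by
  rw [Complex.norm_exp]
  congr 1
  have hW' : W ≠ 0 := ne_of_gt hW
  simp [Complex.div_re, Complex.normSq]
  field_simp

/-- Exponential bounds for the short-range part of the strip potential
(conditions (2.11)-(2.12) for the periodic strip):
(i) `V₂(x,y) ≥ -(2π)⁻¹ exp (-2πx/W)` for all `x > 0`;
(ii) for every `ε > 0` there is `c(ε,W) < ∞` with `V₂(x,y) ≤ c exp (-2πx/W)` for `x ≥ ε`. -/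
theorem strip_potential_exponential_bounds (W : ℝ) (hW : 0 < W) :
    (∀ x y : ℝ, 0 < x →
      -(2 * π)⁻¹ * Real.exp (-(2 * π * x / W)) ≤ stripV₂ W x y) ∧
    (∀ ε : ℝ, 0 < ε → ∃ c : ℝ, ∀ x y : ℝ, ε ≤ x →
      stripV₂ W x y ≤ c * Real.exp (-(2 * π * x / W))) := by
  have hπ : (0:ℝ) < 2 * π := by positivity
  constructor
  · intro x y hx
    set q := Real.exp (-(2 * π * x / W)) with hqdef
    have hq0 : 0 < q := Real.exp_pos _
    have hq1 : q < 1 := by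
      rw [hqdef, Real.exp_lt_one_iff]
      have : 0 < 2 * π * x / W := by positivity
      linarith
    set e := Complex.exp (-(2 * ↑π * ((x : ℂ) + Complex.I * (y : ℂ)) / ↑W)) with hedef
    have habs : ‖e‖ = q := strip_abs_exp_eq W x y hW
    have hub : ‖1 - e‖ ≤ 1 + q := by
      calc ‖1 - e‖ ≤ ‖(1:ℂ)‖ + ‖e‖ := by
            simpa [sub_eq_add_neg] using norm_add_le (1:ℂ) (-e)
        _ = 1 + q := by rw [habs, norm_one]
    have hlb : 1 - q ≤ ‖1 - e‖ := by
      have := norm_sub_norm_le (1:ℂ) e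
      rw [norm_one, habs] at this
      linarith
    have hlog : Real.log (‖1 - e‖) ≤ q := by
      calc Real.log (‖1 - e‖) ≤ Real.log (1 + q) :=
            Real.log_le_log (by linarith) hub
        _ ≤ (1 + q) - 1 := Real.log_le_sub_one_of_pos (by linarith)
        _ = q := by ring
    rw [stripV₂]
    have h2 : (0:ℝ) < (2*π)⁻¹ := by positivity
    nlinarith [hlog]
  · intro ε hε
    set q₀ := Real.exp (-(2 * π * ε / W)) with hq₀def
    have hq₀0 : 0 < q₀ := Real.exp_pos _
    have hq₀1 : q₀ < 1 := by
      rw [hq₀def, Real.exp_lt_one_iff]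
      have : 0 < 2 * π * ε / W := by positivity
      linarith
    refine ⟨(2*π)⁻¹ * (1 - q₀)⁻¹, ?_⟩
    intro x y hx
    set q := Real.exp (-(2 * π * x / W)) with hqdef
    have hq0 : 0 < q := Real.exp_pos _
    have hqle : q ≤ q₀ := by
      rw [hqdef, hq₀def, Real.exp_le_exp]
      have : 2 * π * ε / W ≤ 2 * π * x / W := by gcongr
      linarith
    have hq1 : q < 1 := lt_of_le_of_lt hqle hq₀1
    set e := Complex.exp (-(2 * ↑π * ((x : ℂ) + Complex.I * (y : ℂ)) / ↑W)) with hedef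
    have habs : ‖e‖ = q := strip_abs_exp_eq W x y hW
    have hlb : 1 - q ≤ ‖1 - e‖ := by
      have := norm_sub_norm_le (1:ℂ) e
      rw [norm_one, habs] at this
      linarith
    -- -log(1-q) ≤ q/(1-q)
    have hkey : -Real.log (1 - q) ≤ q * (1 - q₀)⁻¹ := by
      have h1q : (0:ℝ) < 1 - q := by linarith
      have := Real.log_le_sub_one_of_pos (show (0:ℝ) < (1-q)⁻¹ by positivity)
      rw [Real.log_inv] at this
      have h2 : (1 - q)⁻¹ - 1 = q / (1 - q) := by field_simp; ring
      rw [h2] at this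
      have h3 : q / (1 - q) ≤ q * (1 - q₀)⁻¹ := by
        rw [div_eq_mul_inv]
        apply mul_le_mul_of_nonneg_left ?_ (le_of_lt hq0)
        apply inv_anti₀ (by linarith)
        linarith
      linarith
    have hloglb : Real.log (1 - q) ≤ Real.log (‖1 - e‖) :=
      Real.log_le_log (by linarith) hlb
    rw [stripV₂]
    have : -Real.log (‖1 - e‖) ≤ q * (1 - q₀)⁻¹ := by linarith
    calc -(2 * π)⁻¹ * Real.log (‖1 - e‖)
        = (2*π)⁻¹ * (-Real.log (‖1 - e‖)) := by ring
      _ ≤ (2*π)⁻¹ * (q * (1 - q₀)⁻¹) := by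
          apply mul_le_mul_of_nonneg_left this (by positivity)
      _ = (2*π)⁻¹ * (1 - q₀)⁻¹ * q := by ring
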